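/- arXiv:1610.04930 — 5 statements merged into one kernel-verified Lean document; each statement's English description precedes it below -/
import Mathlib

section
/- For every k ∈ ℝ², γ(k) = 0 if and only if k ∈ (K + Λ_h*) ∪ (−K + Λ_h*); equivalently, 1 + exp(i k·v₁) + exp(i k·v₂) = 0 if and only if k = K + m₁k₁ + m₂k₂ or k = −K + m₁k₁ + m₂k₂ for some m₁, m₂ ∈ ℤ. -/
noncomputable section

open scoped Real

/-- The plane `ℝ²` with the Euclidean norm. -/
abbrev V2 : Type := EuclideanSpace ℝ (Fin 2)

/-- The vector `(a, b) ∈ ℝ²`. -/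
def vec (a b : ℝ) : V2 := WithLp.toLp 2 ![a, b]

/-- The dot product on `ℝ²`. -/
def dot (a b : V2) : ℝ := a 0 * b 0 + a 1 * b 1

/-- `v₁ = (√3/2, 1/2)`. -/
def v1 : V2 := vec (Real.sqrt 3 / 2) (1 / 2)

/-- `v₂ = (√3/2, −1/2)`. -/
def v2 : V2 := vec (Real.sqrt 3 / 2) (-(1 / 2))

/-- The lattice point `m₁ v₁ + m₂ v₂` of `Λ_h`. -/
def lat (m : ℤ × ℤ) : V2 := (m.1 : ℝ) • v1 + (m.2 : ℝ) • v2

/-- `k₁ = 2π(1/√3, 1)`. -/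
def dk1 : V2 := vec (2 * π / Real.sqrt 3) (2 * π)

/-- `k₂ = 2π(1/√3, −1)`. -/
def dk2 : V2 := vec (2 * π / Real.sqrt 3) (-(2 * π))

/-- The dual lattice point `m₁ k₁ + m₂ k₂` of `Λ_h*`. -/
def dlat (m : ℤ × ℤ) : V2 := (m.1 : ℝ) • dk1 + (m.2 : ℝ) • dk2

/-- `K = (0, 4π/3)`. -/
def KK : V2 := vec 0 (4 * π / 3)

/-- Clockwise rotation by `2π/3` about the origin (the matrix `R`). -/
def rotR (x : V2) : V2 :=
  vec (-(1/2) * x 0 + (Real.sqrt 3 / 2) * x 1) (-(Real.sqrt 3 / 2) * x 0 - (1/2) * x 1)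

/-- The transpose `Rᵀ`. -/
def rotRT (x : V2) : V2 :=
  vec (-(1/2) * x 0 - (Real.sqrt 3 / 2) * x 1) ((Real.sqrt 3 / 2) * x 0 - (1/2) * x 1)

/-- Clockwise rotation by `π/3` about the origin (the matrix `R₆₀`). -/
def rot60 (x : V2) : V2 :=
  vec ((1/2) * x 0 + (Real.sqrt 3 / 2) * x 1) (-(Real.sqrt 3 / 2) * x 0 + (1/2) * x 1)

/-- `e_{A,1} = (1/√3, 0)`. -/
def eA1 : V2 := vec (1 / Real.sqrt 3) 0

/-- `e_{A,ν} = R^{ν−1} e_{A,1}` for `ν = 1, 2, 3` (indexed by `Fin 3`). -/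
def eA (ν : Fin 3) : V2 := rotR^[(ν : ℕ)] eA1

/-- `e_{B,ν} = −e_{A,ν}`. -/
def eB (ν : Fin 3) : V2 := -eA ν

/-- `e_{I,ν}` for `I ∈ {A, B}` (`true ↦ A`, `false ↦ B`). -/
def eVec (I : Bool) (ν : Fin 3) : V2 := if I then eA ν else eB ν

/-- `γ(k) = Σ_{ν=1}^3 exp(i k·e_{B,ν})`. -/
def gam (k : V2) : ℂ := ∑ ν : Fin 3, Complex.exp (Complex.I * (dot k (eB ν)))

/-- `W_TB(k) = |γ(k)|`. -/
def Wtb (k : V2) : ℝ := ‖gam k‖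

/-- `v_B = (1/√3, 0)`. -/
def vB : V2 := vec (1 / Real.sqrt 3) 0

/-- The hexagon center `x_c = (1/(2√3), −1/2)`. -/
def xc : V2 := vec (1 / (2 * Real.sqrt 3)) (-(1 / 2))

/-- The rotation operator `ℛ[f](x) = f(x_c + Rᵀ(x − x_c))`. -/
def Rop (f : V2 → ℂ) (x : V2) : ℂ := f (xc + rotRT (x - xc))

/-- `τ = exp(2πi/3)`. -/
def tau : ℂ := Complex.exp (2 * (π : ℂ) * Complex.I / 3)

/-- The Euclidean norm of an integer pair. -/
def znorm (m : ℤ × ℤ) : ℝ := Real.sqrt ((m.1 : ℝ) ^ 2 + (m.2 : ℝ) ^ 2)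

/-- `N_bad(w) = {m ∈ ℤ² : |w + m₁v₁ + m₂v₂| = 1/√3}`. -/
def Nbad (w : V2) : Set (ℤ × ℤ) := {m | ‖w + lat m‖ = 1 / Real.sqrt 3}

/-- The `i`-th standard basis vector of `ℝ²`. -/
def basis2 (i : Fin 2) : V2 := EuclideanSpace.single i 1

/-- Partial derivative `∂_i f` of a complex-valued function on `ℝ²`. -/
def pd (i : Fin 2) (f : V2 → ℂ) : V2 → ℂ := fun x => fderiv ℝ f x (basis2 i)

/-- The Laplacian `Δf = ∂₁²f + ∂₂²f` of a complex-valued function on `ℝ²`. -/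
def lap (f : V2 → ℂ) (x : V2) : ℂ :=
  ∑ i : Fin 2, fderiv ℝ (fun y => fderiv ℝ f y (basis2 i)) x (basis2 i)

/-- The radial profile of the fundamental solution of `−Δ + 1` on `ℝ²`:
`𝒦(r) = (2π)⁻¹ e^{−r} ∫₀^∞ e^{−ζ} ζ^{−1/2} (2r + ζ)^{−1/2} dζ`. -/
def Kker (r : ℝ) : ℝ :=
  (2 * π)⁻¹ * Real.exp (-r) *
    ∫ ζ in Set.Ioi (0 : ℝ), Real.exp (-ζ) * ζ ^ (-(1/2 : ℝ)) * (2 * r + ζ) ^ (-(1/2 : ℝ))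

set_option linter.unreachableTactic false
set_option linter.unusedTactic false

lemma sqrt3_pos : (0:ℝ) < Real.sqrt 3 := Real.sqrt_pos.mpr (by norm_num)
lemma sqrt3_ne : Real.sqrt 3 ≠ 0 := ne_of_gt sqrt3_pos
lemma sqrt3_sq : Real.sqrt 3 * Real.sqrt 3 = 3 := Real.mul_self_sqrt (by norm_num)
lemma cos_2pi3 : Real.cos (2*π/3) = -(1/2) := by
  have h : (2*π/3 : ℝ) = π - π/3 := by ring
  rw [h, Real.cos_pi_sub, Real.cos_pi_div_three]
lemma sin_2pi3 : Real.sin (2*π/3) = Real.sqrt 3 / 2 := by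
  have h : (2*π/3 : ℝ) = π - π/3 := by ring
  rw [h, Real.sin_pi_sub, Real.sin_pi_div_three]
lemma exp_I_eq (x : ℝ) : Complex.exp (Complex.I * x) = Real.cos x + Real.sin x * Complex.I := by
  rw [mul_comm, Complex.exp_mul_I, Complex.ofReal_cos, Complex.ofReal_sin]
lemma exp_I_eq_iff (x c : ℝ) : Complex.exp (Complex.I * x) = Complex.exp (Complex.I * c) ↔ ∃ n : ℤ, x = c + 2*π*n := by
  rw [Complex.exp_eq_exp_iff_exists_int]
  constructor
  · rintro ⟨n, hn⟩
    refine ⟨n, ?_⟩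
    have := congrArg Complex.im hn
    simp at this; linarith [this]
  · rintro ⟨n, hn⟩
    exact ⟨n, by push_cast [hn]; ring⟩

lemma exp_of_cs (x c : ℝ) (h1 : Real.cos x = Real.cos c) (h2 : Real.sin x = Real.sin c) :
    Complex.exp (Complex.I * x) = Complex.exp (Complex.I * c) := by
  rw [exp_I_eq, exp_I_eq, h1, h2]

lemma key (a b : ℝ) :
    1 + Complex.exp (Complex.I * a) + Complex.exp (Complex.I * b) = 0 ↔
    ∃ n m : ℤ, (a = 2*π/3 + 2*π*n ∧ b = -(2*π/3) + 2*π*m) ∨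
               (a = -(2*π/3) + 2*π*n ∧ b = 2*π/3 + 2*π*m) := by
  constructor
  · intro h
    rw [exp_I_eq, exp_I_eq] at h
    have hre := congrArg Complex.re h
    have him := congrArg Complex.im h
    simp [Complex.cos_ofReal_re, Complex.sin_ofReal_re] at hre him
    have pa := Real.sin_sq_add_cos_sq a
    have pb := Real.sin_sq_add_cos_sq b
    have h1 : Real.cos b = -1 - Real.cos a := by linarith
    have hsb : Real.sin b = -Real.sin a := by linarith
    have h3 : (-Real.sin a)^2 + (-1-Real.cos a)^2 = 1 := by rw [← h1, ← hsb]; exact pb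
    have hca : Real.cos a = -(1/2) := by linear_combination (1/2)*h3 - (1/2)*pa
    have hcb : Real.cos b = -(1/2) := by linarith
    have hsq : (Real.sin a - Real.sqrt 3/2) * (Real.sin a + Real.sqrt 3/2) = 0 := by
      nlinarith [pa, sqrt3_sq]
    rcases mul_eq_zero.mp hsq with hsa | hsa
    · have hsa : Real.sin a = Real.sqrt 3 / 2 := by linarith
      have e1 : Complex.exp (Complex.I * a) = Complex.exp (Complex.I * (2*π/3 : ℝ)) :=
        exp_of_cs _ _ (by rw [hca, cos_2pi3]) (by rw [hsa, sin_2pi3])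
      have e2 : Complex.exp (Complex.I * b) = Complex.exp (Complex.I * (-(2*π/3) : ℝ)) :=
        exp_of_cs _ _ (by rw [hcb, Real.cos_neg, cos_2pi3])
          (by rw [hsb, hsa, Real.sin_neg, sin_2pi3])
      obtain ⟨n, hn⟩ := (exp_I_eq_iff _ _).mp e1
      obtain ⟨m, hm⟩ := (exp_I_eq_iff _ _).mp e2
      exact ⟨n, m, Or.inl ⟨hn, hm⟩⟩
    · have hsa : Real.sin a = -(Real.sqrt 3 / 2) := by linarith
      have e1 : Complex.exp (Complex.I * a) = Complex.exp (Complex.I * (-(2*π/3) : ℝ)) :=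
        exp_of_cs _ _ (by rw [hca, Real.cos_neg, cos_2pi3])
          (by rw [hsa, Real.sin_neg, sin_2pi3])
      have e2 : Complex.exp (Complex.I * b) = Complex.exp (Complex.I * (2*π/3 : ℝ)) :=
        exp_of_cs _ _ (by rw [hcb, cos_2pi3]) (by rw [hsb, hsa, sin_2pi3]; ring)
      obtain ⟨n, hn⟩ := (exp_I_eq_iff _ _).mp e1
      obtain ⟨m, hm⟩ := (exp_I_eq_iff _ _).mp e2
      exact ⟨n, m, Or.inr ⟨hn, hm⟩⟩
  · rintro ⟨n, m, ⟨ha, hb⟩ | ⟨ha, hb⟩⟩ <;> subst ha <;> subst hb <;>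
    · rw [(exp_I_eq_iff _ _).mpr ⟨n, rfl⟩, (exp_I_eq_iff _ _).mpr ⟨m, rfl⟩,
        exp_I_eq, exp_I_eq]
      simp [cos_2pi3, sin_2pi3, Real.cos_neg, Real.sin_neg]
      ring

lemma vec_0 (a b : ℝ) : vec a b 0 = a := rfl
lemma vec_1 (a b : ℝ) : vec a b 1 = b := rfl
lemma dot1 (k : V2) : dot k v1 = Real.sqrt 3 / 2 * k 0 + k 1 / 2 := by
  simp [dot, v1, vec_0, vec_1]; ring
lemma dot2 (k : V2) : dot k v2 = Real.sqrt 3 / 2 * k 0 - k 1 / 2 := by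
  simp [dot, v2, vec_0, vec_1]; ring
lemma eBzero : eB 0 = vec (-(1/Real.sqrt 3)) 0 := by
  ext i; fin_cases i <;> simp [eB, eA, eA1, vec]
lemma dotB0 (k : V2) : dot k (eB 0) = -(dot k v1 + dot k v2)/3 := by
  rw [eBzero, dot1, dot2]
  simp [dot, vec_0, vec_1]
  field_simp
  linear_combination (2 * k 0) * sqrt3_sq
lemma eAone : eA 1 = vec (-(1/(2*Real.sqrt 3))) (-(1/2)) := by
  show rotR eA1 = _
  ext i
  fin_cases i <;> simp [rotR, eA1, vec_0, vec_1, vec] <;> field_simp <;> ring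
lemma eAtwo : eA 2 = vec (-(1/(2*Real.sqrt 3))) (1/2) := by
  show rotR (rotR eA1) = _
  rw [show rotR eA1 = vec (-(1/(2*Real.sqrt 3))) (-(1/2)) from eAone]
  ext i
  fin_cases i
  · simp [rotR, vec_0, vec_1, vec]
    field_simp
    linear_combination (-1) * sqrt3_sq
  · simp [rotR, vec_0, vec_1, vec]
    field_simp
    ring
lemma dotB1 (k : V2) : dot k (eB 1) = dot k (eB 0) + dot k v1 := by
  rw [dotB0, dot1, dot2]
  have h : eB 1 = vec (1/(2*Real.sqrt 3)) (1/2) := by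
    rw [eB, eAone]; ext i; fin_cases i <;> simp [vec] <;> ring
  rw [h]
  simp [dot, vec_0, vec_1]
  field_simp
  linear_combination (-(k 0)) * sqrt3_sq
lemma dotB2 (k : V2) : dot k (eB 2) = dot k (eB 0) + dot k v2 := by
  rw [dotB0, dot1, dot2]
  have h : eB 2 = vec (1/(2*Real.sqrt 3)) (-(1/2)) := by
    rw [eB, eAtwo]; ext i; fin_cases i <;> simp [vec] <;> ring
  rw [h]
  simp [dot, vec_0, vec_1]
  field_simp
  linear_combination (-(k 0)) * sqrt3_sq

lemma gam_factor (k : V2) :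
    gam k = Complex.exp (Complex.I * (dot k (eB 0))) *
      (1 + Complex.exp (Complex.I * (dot k v1)) + Complex.exp (Complex.I * (dot k v2))) := by
  rw [gam, Fin.sum_univ_three, dotB1 k, dotB2 k]
  rw [show ((dot k (eB 0) + dot k v1 : ℝ) : ℂ) = (dot k (eB 0) : ℝ) + (dot k v1 : ℝ) by push_cast; ring]
  rw [show ((dot k (eB 0) + dot k v2 : ℝ) : ℂ) = (dot k (eB 0) : ℝ) + (dot k v2 : ℝ) by push_cast; ring]
  rw [mul_add, mul_add, Complex.exp_add, Complex.exp_add]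
  ring

lemma hdiv : 2*π/Real.sqrt 3 = 2*Real.sqrt 3*π/3 := by
  rw [div_eq_div_iff sqrt3_ne (by norm_num : (3:ℝ) ≠ 0)]
  linear_combination (-2*π)*sqrt3_sq

lemma coord (k : V2) :
    (∃ n m : ℤ, (dot k v1 = 2*π/3 + 2*π*n ∧ dot k v2 = -(2*π/3) + 2*π*m) ∨
                (dot k v1 = -(2*π/3) + 2*π*n ∧ dot k v2 = 2*π/3 + 2*π*m)) ↔
    (∃ m₁ m₂ : ℤ, k = KK + ((m₁ : ℝ) • dk1 + (m₂ : ℝ) • dk2) ∨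
        k = -KK + ((m₁ : ℝ) • dk1 + (m₂ : ℝ) • dk2)) := by
  constructor
  · rintro ⟨n, m, ⟨ha, hb⟩ | ⟨ha, hb⟩⟩ <;>
      [(refine ⟨n, m, Or.inl ?_⟩); (refine ⟨n, m, Or.inr ?_⟩)] <;>
      rw [dot1] at ha <;> rw [dot2] at hb <;>
      ext i <;> fin_cases i <;>
      simp [KK, dk1, dk2, vec, vec_0, vec_1, hdiv]
    · linear_combination (Real.sqrt 3/3)*ha + (Real.sqrt 3/3)*hb + (-(k 0)/3)*sqrt3_sq
    · linear_combination ha - hb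
    · linear_combination (Real.sqrt 3/3)*ha + (Real.sqrt 3/3)*hb + (-(k 0)/3)*sqrt3_sq
    · linear_combination ha - hb
  · rintro ⟨m₁, m₂, h | h⟩ <;>
      [(refine ⟨m₁, m₂, Or.inl ⟨?_, ?_⟩⟩); (refine ⟨m₁, m₂, Or.inr ⟨?_, ?_⟩⟩)] <;>
      subst h
    · rw [dot1]; simp [KK, dk1, dk2, vec, vec_0, vec_1, hdiv]
      linear_combination (π*(m₁:ℝ)/3 + π*(m₂:ℝ)/3) * sqrt3_sq
    · rw [dot2]; simp [KK, dk1, dk2, vec, vec_0, vec_1, hdiv]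
      linear_combination (π*(m₁:ℝ)/3 + π*(m₂:ℝ)/3) * sqrt3_sq
    · rw [dot1]; simp [KK, dk1, dk2, vec, vec_0, vec_1, hdiv]
      linear_combination (π*(m₁:ℝ)/3 + π*(m₂:ℝ)/3) * sqrt3_sq
    · rw [dot2]; simp [KK, dk1, dk2, vec, vec_0, vec_1, hdiv]
      linear_combination (π*(m₁:ℝ)/3 + π*(m₂:ℝ)/3) * sqrt3_sq

/-- For `k ∈ ℝ²`, `γ(k) = 0` iff `k ∈ (K + Λ_h*) ∪ (−K + Λ_h*)`;
equivalently `1 + exp(i k·v₁) + exp(i k·v₂) = 0` iff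
`k = K + m₁k₁ + m₂k₂` or `k = −K + m₁k₁ + m₂k₂` for some integers `m₁, m₂`. -/
theorem statement0 (k : V2) :
    (gam k = 0 ↔
      ∃ m₁ m₂ : ℤ, k = KK + ((m₁ : ℝ) • dk1 + (m₂ : ℝ) • dk2) ∨
        k = -KK + ((m₁ : ℝ) • dk1 + (m₂ : ℝ) • dk2)) ∧
    ((1 + Complex.exp (Complex.I * (dot k v1)) + Complex.exp (Complex.I * (dot k v2)) = 0 ↔
      ∃ m₁ m₂ : ℤ, k = KK + ((m₁ : ℝ) • dk1 + (m₂ : ℝ) • dk2) ∨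
        k = -KK + ((m₁ : ℝ) • dk1 + (m₂ : ℝ) • dk2))) := by
  have h1 : gam k = 0 ↔
      1 + Complex.exp (Complex.I * (dot k v1)) + Complex.exp (Complex.I * (dot k v2)) = 0 := by
    rw [gam_factor k]
    constructor
    · intro h
      rcases mul_eq_zero.mp h with h | h
      · exact absurd h (Complex.exp_ne_zero _)
      · exact h
    · intro h
      rw [h, mul_zero]
  have h2 := (key (dot k v1) (dot k v2)).trans (coord k)
  exact ⟨h1.trans h2, h2⟩
end
end

section
/- Let V: ℝ² → ℝ be continuous and satisfy V(x_c + Rᵀ(x − x_c)) = V(x) for all x ∈ ℝ². Then: (a) for every twice continuously differentiable f: ℝ² → ℂ, (−Δ + V)(ℛ[f]) = ℛ[(−Δ + V)f] as functions on ℝ² (the commutator of −Δ + V and ℛ vanishes); (b) for any k ∈ ℝ², if f(x + v) = exp(i k·v) f(x) for all x ∈ ℝ² and v ∈ Λ_h, then ℛ[f](x + v) = exp(i (Rk)·v) ℛ[f](x) for all x and v ∈ Λ_h. Consequently, if K⋆ ∈ ℝ² satisfies RK⋆ − K⋆ ∈ Λ_h* and φ is a twice continuously differentiable solution of (−Δ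 + V)φ = Eφ with φ(x + v) = exp(i K⋆·v) φ(x) for all v ∈ Λ_h, then ℛ[φ] is also a solution of (−Δ + V)ψ = Eψ with ψ(x + v) = exp(i K⋆·v) ψ(x) for all v ∈ Λ_h. -/
noncomputable section

open scoped Real

namespace Statement6Aux

lemma h3' : Real.sqrt 3 ^ 2 = 3 := Real.sq_sqrt (by norm_num)

/-- `rotRT` as a linear map. -/
def AL : V2 →ₗ[ℝ] V2 where
  toFun := rotRT
  map_add' x y := by
    ext j; fin_cases j <;>
      simp [rotRT, vec, PiLp.add_apply] <;> ring
  map_smul' c x := by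
    ext j; fin_cases j <;>
      simp [rotRT, vec, PiLp.smul_apply, smul_eq_mul] <;> ring

/-- `rotRT` as a continuous linear map. -/
def Amap : V2 →L[ℝ] V2 := LinearMap.toContinuousLinearMap AL

lemma Amap_apply (x : V2) : Amap x = rotRT x := rfl

lemma Amap_b0 : Amap (basis2 0) = (-(1/2) : ℝ) • basis2 0 + (Real.sqrt 3 / 2) • basis2 1 := by
  ext j; fin_cases j <;>
    simp [Amap_apply, rotRT, vec, basis2, EuclideanSpace.single_apply, PiLp.add_apply,
      PiLp.smul_apply, smul_eq_mul] <;> ring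

lemma Amap_b1 : Amap (basis2 1) = (-(Real.sqrt 3 / 2) : ℝ) • basis2 0 + (-(1/2) : ℝ) • basis2 1 := by
  ext j; fin_cases j <;>
    simp [Amap_apply, rotRT, vec, basis2, EuclideanSpace.single_apply, PiLp.add_apply,
      PiLp.smul_apply, smul_eq_mul] <;> ring

lemma comp_fderiv' {F : Type*} [NormedAddCommGroup F] [NormedSpace ℝ F]
    (f : V2 → F) (hf : Differentiable ℝ f) (c y : V2) :
    fderiv ℝ (fun z => f (c + Amap z)) y = (fderiv ℝ f (c + Amap y)).comp (Amap : V2 →L[ℝ] V2) := by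
  have h1 : DifferentiableAt ℝ (fun z : V2 => c + Amap z) y :=
    (Amap.differentiable.const_add c) y
  have h2 : fderiv ℝ (fun z : V2 => c + Amap z) y = (Amap : V2 →L[ℝ] V2) := by
    rw [fderiv_const_add, Amap.fderiv]
  have := fderiv_comp (𝕜 := ℝ) y (hf (c + Amap y)) h1
  simpa [Function.comp_def, h2] using this

lemma second_eq (f : V2 → ℂ) (hf2 : Differentiable ℝ (fderiv ℝ f)) (w v u : V2) :
    fderiv ℝ (fun y => fderiv ℝ f y v) w u = fderiv ℝ (fderiv ℝ f) w u v := by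
  have h := fderiv_clm_apply (𝕜 := ℝ) (c := fderiv ℝ f) (u := fun _ => v)
    (hf2 w) (differentiableAt_const v)
  simp only [fderiv_fun_const, Pi.zero_apply, ContinuousLinearMap.comp_zero, zero_add] at h
  rw [h]; rfl

lemma pt_eq (y : V2) : xc + rotRT (y - xc) = (xc - Amap xc) + Amap y := by
  have : rotRT (y - xc) = Amap y - Amap xc := by rw [← Amap_apply, map_sub]
  rw [this]; abel

lemma rot_quad (B : V2 →L[ℝ] (V2 →L[ℝ] ℂ)) :
    B (Amap (basis2 0)) (Amap (basis2 0)) + B (Amap (basis2 1)) (Amap (basis2 1)) =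
    B (basis2 0) (basis2 0) + B (basis2 1) (basis2 1) := by
  have h3 : (Real.sqrt 3 : ℂ) * (Real.sqrt 3 : ℂ) = 3 := by
    norm_cast; exact Real.mul_self_sqrt (by norm_num)
  rw [Amap_b0, Amap_b1]
  simp only [map_add, map_smul, ContinuousLinearMap.add_apply, ContinuousLinearMap.smul_apply,
    ContinuousLinearMap.coe_smul', Pi.smul_apply, smul_smul, Complex.real_smul]
  push_cast
  linear_combination ((B (basis2 0) (basis2 0) + B (basis2 1) (basis2 1)) / 4) * h3

lemma lap_comp (f : V2 → ℂ) (hf : ContDiff ℝ 2 f) (x : V2) :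
    lap (fun z => f (xc + rotRT (z - xc))) x = lap f (xc + rotRT (x - xc)) := by
  set c := xc - Amap xc with hc
  have hf1 : Differentiable ℝ f := hf.differentiable (by norm_num)
  have hf2 : Differentiable ℝ (fderiv ℝ f) :=
    (hf.fderiv_right (m := 1) (by norm_num)).differentiable (by norm_num)
  have hfe : (fun z => f (xc + rotRT (z - xc))) = fun z => f (c + Amap z) := by
    funext z; rw [pt_eq]
  have hdv : ∀ v : V2, Differentiable ℝ (fun w => fderiv ℝ f w v) := by
    intro v
    exact fun w => ((ContinuousLinearMap.apply ℝ ℂ v).differentiable.comp hf2) w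
  have step1 : ∀ v : V2, (fun y => fderiv ℝ (fun z => f (c + Amap z)) y v)
      = fun y => fderiv ℝ f (c + Amap y) (Amap v) := by
    intro v; funext y; rw [comp_fderiv' f hf1 c y]; rfl
  have step2 : ∀ (i : Fin 2),
      fderiv ℝ (fun y => fderiv ℝ (fun z => f (c + Amap z)) y (basis2 i)) x (basis2 i)
      = fderiv ℝ (fderiv ℝ f) (c + Amap x) (Amap (basis2 i)) (Amap (basis2 i)) := by
    intro i
    rw [step1 (basis2 i)]
    have h := comp_fderiv' (fun w => fderiv ℝ f w (Amap (basis2 i))) (hdv _) c x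
    rw [h]
    show fderiv ℝ (fun w => fderiv ℝ f w (Amap (basis2 i))) (c + Amap x) (Amap (basis2 i)) = _
    rw [second_eq f hf2]
  rw [hfe]
  unfold lap
  rw [Fin.sum_univ_two, Fin.sum_univ_two, step2 0, step2 1, pt_eq,
    second_eq f hf2, second_eq f hf2]
  exact rot_quad _

lemma rotRT_lat (m : ℤ × ℤ) : rotRT (lat m) = lat (m.2, -m.1 - m.2) := by
  ext j; fin_cases j
  · simp [rotRT, lat, v1, v2, vec, PiLp.add_apply, PiLp.smul_apply, smul_eq_mul]
    ring
  · simp [rotRT, lat, v1, v2, vec, PiLp.add_apply, PiLp.smul_apply, smul_eq_mul]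
    linear_combination ((m.1 + m.2 : ℝ)/4) * h3'

lemma dot_rot (k v : V2) : dot k (rotRT v) = dot (rotR k) v := by
  simp [dot, rotR, rotRT, vec]; ring

lemma dot_add_left (a b c : V2) : dot (a + b) c = dot a c + dot b c := by
  simp [dot, PiLp.add_apply]; ring

lemma dot_dlat_lat (m' m : ℤ × ℤ) :
    dot (dlat m') (lat m) = 2 * π * ((m'.1 * m.1 + m'.2 * m.2 : ℤ) : ℝ) := by
  simp [dot, dlat, lat, dk1, dk2, v1, v2, vec, PiLp.add_apply, PiLp.smul_apply, smul_eq_mul]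
  field_simp
  linear_combination (0:ℝ) * h3'

end Statement6Aux


/-- Let `V : ℝ² → ℝ` be continuous with `V(x_c + Rᵀ(x − x_c)) = V(x)`.
Then (a) `−Δ + V` commutes with `ℛ` on `C²` functions; (b) `ℛ` maps `k`-pseudo-periodic
functions to `Rk`-pseudo-periodic functions; consequently, if `RK⋆ − K⋆ ∈ Λ_h*` and `φ`
is a `C²`, `K⋆`-pseudo-periodic solution of `(−Δ + V)φ = Eφ`, then so is `ℛ[φ]`. -/
theorem statement6 (V : V2 → ℝ) (hVc : Continuous V)
    (hVR : ∀ x : V2, V (xc + rotRT (x - xc)) = V x) :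
    (∀ f : V2 → ℂ, ContDiff ℝ 2 f → ∀ x : V2,
      -lap (Rop f) x + (V x : ℂ) * Rop f x =
        Rop (fun y => -lap f y + (V y : ℂ) * f y) x) ∧
    (∀ k : V2, ∀ f : V2 → ℂ,
      (∀ x : V2, ∀ m : ℤ × ℤ, f (x + lat m) = Complex.exp (Complex.I * (dot k (lat m))) * f x) →
      (∀ x : V2, ∀ m : ℤ × ℤ,
        Rop f (x + lat m) = Complex.exp (Complex.I * (dot (rotR k) (lat m))) * Rop f x)) ∧
    (∀ Kstar : V2, (∃ m : ℤ × ℤ, rotR Kstar - Kstar = dlat m) →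
      ∀ E : ℝ, ∀ φ : V2 → ℂ, ContDiff ℝ 2 φ →
      (∀ x : V2, -lap φ x + (V x : ℂ) * φ x = (E : ℂ) * φ x) →
      (∀ x : V2, ∀ m : ℤ × ℤ,
        φ (x + lat m) = Complex.exp (Complex.I * (dot Kstar (lat m))) * φ x) →
      ((∀ x : V2, -lap (Rop φ) x + (V x : ℂ) * Rop φ x = (E : ℂ) * Rop φ x) ∧
       (∀ x : V2, ∀ m : ℤ × ℤ,
         Rop φ (x + lat m) = Complex.exp (Complex.I * (dot Kstar (lat m))) * Rop φ x))) := by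
  
  have parta : ∀ f : V2 → ℂ, ContDiff ℝ 2 f → ∀ x : V2,
      -lap (Rop f) x + (V x : ℂ) * Rop f x =
        Rop (fun y => -lap f y + (V y : ℂ) * f y) x := by
    intro f hf x
    show -lap (fun z => f (xc + rotRT (z - xc))) x + (V x : ℂ) * f (xc + rotRT (x - xc))
      = -lap f (xc + rotRT (x - xc))
        + (V (xc + rotRT (x - xc)) : ℂ) * f (xc + rotRT (x - xc))
    rw [Statement6Aux.lap_comp f hf x, hVR x]
  have partb : ∀ k : V2, ∀ f : V2 → ℂ,
      (∀ x : V2, ∀ m : ℤ × ℤ, f (x + lat m) = Complex.exp (Complex.I * (dot k (lat m))) * f x) →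
      (∀ x : V2, ∀ m : ℤ × ℤ,
        Rop f (x + lat m) = Complex.exp (Complex.I * (dot (rotR k) (lat m))) * Rop f x) := by
    intro k f hper x m
    have key : xc + rotRT (x + lat m - xc) = (xc + rotRT (x - xc)) + lat (m.2, -m.1 - m.2) := by
      rw [← Statement6Aux.rotRT_lat m]
      have h : rotRT (x + lat m - xc) = rotRT (x - xc) + rotRT (lat m) := by
        rw [← Statement6Aux.Amap_apply, ← Statement6Aux.Amap_apply,
          ← Statement6Aux.Amap_apply, ← map_add]
        congr 1; abel
      rw [h]; abel
    show f (xc + rotRT (x + lat m - xc)) = _ * f (xc + rotRT (x - xc))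
    rw [key, hper (xc + rotRT (x - xc)) (m.2, -m.1 - m.2), ← Statement6Aux.rotRT_lat m,
      Statement6Aux.dot_rot]
  refine ⟨parta, partb, ?_⟩
  intro Kstar hK E φ hφ heq hper
  obtain ⟨m', hm'⟩ := hK
  constructor
  · intro x
    rw [parta φ hφ x]
    show -lap φ (xc + rotRT (x - xc)) + (V (xc + rotRT (x - xc)) : ℂ) * φ (xc + rotRT (x - xc))
      = (E : ℂ) * φ (xc + rotRT (x - xc))
    exact heq _
  · intro x m
    rw [partb Kstar φ hper x m]
    have hKs : rotR Kstar = dlat m' + Kstar := sub_eq_iff_eq_add.mp hm'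
    rw [hKs, Statement6Aux.dot_add_left, Statement6Aux.dot_dlat_lat]
    congr 1
    rw [Complex.ofReal_add, mul_add, Complex.exp_add]
    have h1 : Complex.I * ((2 * π * ((m'.1 * m.1 + m'.2 * m.2 : ℤ) : ℝ) : ℝ) : ℂ)
        = ((m'.1 * m.1 + m'.2 * m.2 : ℤ) : ℂ) * (2 * π * Complex.I) := by
      push_cast; ring
    rw [h1, Complex.exp_int_mul_two_pi_mul_I, one_mul]
end
end

section
/- Let V: ℝ² → ℝ be continuous and satisfy V(x_c + Rᵀ(x − x_c)) = V(x) for all x, let K⋆ ∈ ℝ² satisfy RK⋆ − K⋆ ∈ Λ_h*, and let κ ∈ ℝ² and E ∈ ℝ. Suppose ψ: ℝ² → ℂ is twice continuously differentiable, satisfies −Δψ + Vψ = Eψ on ℝ², and ψ(x + v) = exp(i (K⋆ + κ)·v) ψ(x) for all x ∈ ℝ² and v ∈ Λ_h. Then ψ̃ := ℛ[ψ] is twice continuously differentiable, satisfies −Δψ̃ + Vψ̃ = Eψ̃ on ℝ², and ψ̃(x + v) = exp(i (K⋆ + Rκ)·v) ψ̃(x) for all x ∈ ℝ² and v ∈ Λ_h.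 Thus rotation by 2π/3 about x_c carries (K⋆ + κ)-pseudo-periodic eigenfunctions with eigenvalue E to (K⋆ + Rκ)-pseudo-periodic eigenfunctions with the same eigenvalue. -/
noncomputable section

open scoped Real

/-- `rotRT` as a linear map. -/
def Lrt : V2 →ₗ[ℝ] V2 where
  toFun := rotRT
  map_add' x y := by ext i; fin_cases i <;> simp [rotRT, vec] <;> ring
  map_smul' c x := by ext i; fin_cases i <;> simp [rotRT, vec] <;> ring

/-- `rotRT` as a continuous linear map. -/
def Lc : V2 →L[ℝ] V2 := LinearMap.toContinuousLinearMap Lrt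

lemma Lc_apply (v : V2) : Lc v = rotRT v := rfl

lemma Lc_b0 : Lc (basis2 0) = (-(1/2 : ℝ)) • basis2 0 + (Real.sqrt 3 / 2) • basis2 1 := by
  ext i; fin_cases i <;>
    simp [Lc_apply, rotRT, vec, basis2, EuclideanSpace.single_apply] <;> ring

lemma Lc_b1 : Lc (basis2 1) = (-(Real.sqrt 3 / 2)) • basis2 0 + (-(1/2 : ℝ)) • basis2 1 := by
  ext i; fin_cases i <;>
    simp [Lc_apply, rotRT, vec, basis2, EuclideanSpace.single_apply] <;> ring

lemma rotRT_lat (m : ℤ × ℤ) : rotRT (lat m) = lat (m.2, -m.1 - m.2) := by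
  ext i; fin_cases i
  · simp [rotRT, lat, v1, v2, vec]; push_cast; ring
  · simp [rotRT, lat, v1, v2, vec]; push_cast
    linear_combination ((m.1 : ℝ)/4 + (m.2 : ℝ)/4) * sqrt3_sq

lemma dot_rotRT (a u : V2) : dot a (rotRT u) = dot (rotR a) u := by
  simp [dot, rotR, rotRT, vec]; ring

lemma rotR_add (a b : V2) : rotR (a + b) = rotR a + rotR b := by
  ext i; fin_cases i <;> simp [rotR, vec] <;> ring

lemma dot_add_left (a b u : V2) : dot (a + b) u = dot a u + dot b u := by
  simp [dot]; ring

lemma dot_dlat_lat (n m : ℤ × ℤ) :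
    dot (dlat n) (lat m) = 2 * π * ((n.1 * m.1 + n.2 * m.2 : ℤ) : ℝ) := by
  simp [dot, dlat, lat, dk1, dk2, v1, v2, vec]
  push_cast
  field_simp
  ring

/-- Rotation by `2π/3` about `x_c` carries `(K⋆ + κ)`-pseudo-periodic
eigenfunctions of `−Δ + V` with eigenvalue `E` to `(K⋆ + Rκ)`-pseudo-periodic
eigenfunctions with the same eigenvalue. -/
theorem statement9 (V : V2 → ℝ) (hVc : Continuous V)
    (hVR : ∀ x : V2, V (xc + rotRT (x - xc)) = V x)
    (Kstar : V2) (hK : ∃ m : ℤ × ℤ, rotR Kstar - Kstar = dlat m)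
    (κ : V2) (E : ℝ) (ψ : V2 → ℂ) (hψ : ContDiff ℝ 2 ψ)
    (heq : ∀ x : V2, -lap ψ x + (V x : ℂ) * ψ x = (E : ℂ) * ψ x)
    (hper : ∀ x : V2, ∀ m : ℤ × ℤ,
      ψ (x + lat m) = Complex.exp (Complex.I * (dot (Kstar + κ) (lat m))) * ψ x) :
    ContDiff ℝ 2 (Rop ψ) ∧
    (∀ x : V2, -lap (Rop ψ) x + (V x : ℂ) * Rop ψ x = (E : ℂ) * Rop ψ x) ∧
    (∀ x : V2, ∀ m : ℤ × ℤ,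
      Rop ψ (x + lat m) =
        Complex.exp (Complex.I * (dot (Kstar + rotR κ) (lat m))) * Rop ψ x) := by
  set g : V2 → V2 := fun x => xc + Lc (x - xc) with hg
  have hRop : Rop ψ = fun x => ψ (g x) := rfl
  have hgeq : g = fun x => Lc x + (xc - Lc xc) := by
    funext x; simp only [hg, map_sub]; abel
  have hgfd : ∀ x : V2, HasFDerivAt g Lc x := by
    intro x; rw [hgeq]; exact Lc.hasFDerivAt.add_const _
  have hψd : Differentiable ℝ ψ := hψ.differentiable (by norm_num)
  have hDd : Differentiable ℝ (fderiv ℝ ψ) :=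
    (hψ.fderiv_right (m := 1) (by norm_num)).differentiable (by norm_num)
  set D2 := fderiv ℝ (fderiv ℝ ψ) with hD2
  -- second derivatives of ψ in any directions
  have hlapψ : ∀ (z : V2) (i : Fin 2) (v : V2),
      fderiv ℝ (fun y => fderiv ℝ ψ y v) z (basis2 i) = D2 z (basis2 i) v := by
    intro z i v
    have h := ((hDd z).hasFDerivAt.clm_apply (hasFDerivAt_const v z)).fderiv
    rw [h]; simp; rfl
  -- first derivative of Rop ψ
  have key1 : ∀ x : V2, HasFDerivAt (Rop ψ) ((fderiv ℝ ψ (g x)).comp Lc) x := by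
    intro x
    exact ((hψd (g x)).hasFDerivAt.comp x (hgfd x))
  have key2 : ∀ (x : V2) (i : Fin 2),
      fderiv ℝ (Rop ψ) x (basis2 i) = fderiv ℝ ψ (g x) (Lc (basis2 i)) := by
    intro x i; rw [(key1 x).fderiv]; rfl
  -- second derivative of Rop ψ
  have key3 : ∀ (x : V2) (i : Fin 2),
      fderiv ℝ (fun y => fderiv ℝ (Rop ψ) y (basis2 i)) x (basis2 i)
        = D2 (g x) (Lc (basis2 i)) (Lc (basis2 i)) := by
    intro x i
    have hfun : (fun y => fderiv ℝ (Rop ψ) y (basis2 i))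
        = fun y => (fderiv ℝ ψ (g y)) (Lc (basis2 i)) := funext fun y => key2 y i
    rw [hfun]
    have hc : HasFDerivAt (fun y => fderiv ℝ ψ (g y)) ((D2 (g x)).comp Lc) x :=
      (hDd (g x)).hasFDerivAt.comp x (hgfd x)
    have h := (hc.clm_apply (hasFDerivAt_const (Lc (basis2 i)) x)).fderiv
    rw [h]; simp
  -- Laplacian commutes with the rotation
  have hlap : ∀ x : V2, lap (Rop ψ) x = lap ψ (g x) := by
    intro x
    have hs : ((Real.sqrt 3 : ℝ) : ℂ) * ((Real.sqrt 3 : ℝ) : ℂ) = 3 := by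
      rw [← Complex.ofReal_mul, sqrt3_sq]; norm_num
    simp only [lap, Fin.sum_univ_two, key3, hlapψ]
    rw [Lc_b0, Lc_b1]
    simp only [map_add, map_smul, ContinuousLinearMap.add_apply,
      ContinuousLinearMap.coe_smul', Pi.smul_apply, ContinuousLinearMap.smul_apply,
      Complex.real_smul, Complex.ofReal_neg, Complex.ofReal_div, Complex.ofReal_ofNat,
      Complex.ofReal_one]
    push_cast
    linear_combination (D2 (g x) (basis2 0) (basis2 0) / 4
      + D2 (g x) (basis2 1) (basis2 1) / 4) * hs
  have hVg : ∀ x : V2, V (g x) = V x := fun x => hVR x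
  refine ⟨?_, ?_, ?_⟩
  · -- smoothness
    have hgc : ContDiff ℝ 2 g :=
      contDiff_const.add (Lc.contDiff.comp (contDiff_id.sub contDiff_const))
    rw [hRop]; exact hψ.comp hgc
  · -- eigenvalue equation
    intro x
    have : Rop ψ x = ψ (g x) := rfl
    rw [hlap x, this, ← hVg x]
    exact heq (g x)
  · -- pseudo-periodicity
    intro x m
    obtain ⟨n, hn⟩ := hK
    have hRK : rotR Kstar = dlat n + Kstar := by
      rw [← hn]; abel
    set m' : ℤ × ℤ := (m.2, -m.1 - m.2) with hm'
    have harg : g (x + lat m) = g x + lat m' := by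
      simp only [hg]
      have : x + lat m - xc = (x - xc) + lat m := by abel
      rw [this, map_add, Lc_apply, Lc_apply, rotRT_lat]
      abel
    have hphase : dot (Kstar + κ) (lat m')
        = dot (Kstar + rotR κ) (lat m)
          + 2 * π * ((n.1 * m.1 + n.2 * m.2 : ℤ) : ℝ) := by
      rw [hm', ← rotRT_lat, dot_rotRT, rotR_add, hRK]
      rw [show dlat n + Kstar + rotR κ = (Kstar + rotR κ) + dlat n by abel]
      rw [dot_add_left, dot_dlat_lat]
    have hL : Rop ψ (x + lat m) = ψ (g x + lat m') := by
      rw [hRop]; simp only [harg]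
    rw [hL, hper (g x) m']
    have hRx : Rop ψ x = ψ (g x) := rfl
    rw [hRx]
    congr 1
    rw [hphase]
    push_cast
    rw [show Complex.I * (↑(dot (Kstar + rotR κ) (lat m))
          + 2 * ↑π * (↑n.1 * ↑m.1 + ↑n.2 * ↑m.2))
        = Complex.I * ↑(dot (Kstar + rotR κ) (lat m))
          + ((n.1 * m.1 + n.2 * m.2 : ℤ) : ℂ) * (2 * ↑π * Complex.I) by push_cast; ring]
    rw [Complex.exp_add, Complex.exp_int_mul_two_pi_mul_I, mul_one]
end
end

section
/- There exists a constant c′ > 0 such that for all I ∈ {A, B}, all ν ∈ {1, 2, 3}, and all z, y ∈ ℝ² with |z| < 0.33/√3 and |y| < 0.33/√3, there exists l₀ ∈ {0, 1, 2, 3, 4, 5} with |z + e_{I,ν} − y| − |z − R₆₀^{l₀} y| ≥ c′ · (1/√3). -/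
noncomputable section

open scoped Real

section Aux

lemma st10_norm_sq (x : V2) : ‖x‖^2 = (x 0)^2 + (x 1)^2 := by
  rw [EuclideanSpace.norm_eq, Real.sq_sqrt (by positivity)]
  simp [Fin.sum_univ_two, sq_abs]

lemma st10_sq3 : Real.sqrt 3 ^ 2 = 3 := Real.sq_sqrt (by norm_num)

lemma st10_norm_eq_of_sq {a b : ℝ} (ha : 0 ≤ a) (hb : 0 ≤ b) (h : a^2 = b^2) : a = b := by
  rw [← Real.sqrt_sq ha, h, Real.sqrt_sq hb]

lemma st10_rot60_apply0 (x : V2) :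
    rot60 x 0 = (1/2) * x 0 + (Real.sqrt 3 / 2) * x 1 := by simp [rot60, vec]

lemma st10_rot60_apply1 (x : V2) :
    rot60 x 1 = -(Real.sqrt 3 / 2) * x 0 + (1/2) * x 1 := by simp [rot60, vec]

lemma st10_rot60_norm (x : V2) : ‖rot60 x‖ = ‖x‖ := by
  refine st10_norm_eq_of_sq (norm_nonneg _) (norm_nonneg _) ?_
  rw [st10_norm_sq, st10_norm_sq, st10_rot60_apply0, st10_rot60_apply1]
  linear_combination ((x 0)^2/4 + (x 1)^2/4) * st10_sq3

lemma st10_rot60_iter_norm (n : ℕ) (x : V2) : ‖rot60^[n] x‖ = ‖x‖ := by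
  induction n with
  | zero => simp
  | succ n ih => rw [Function.iterate_succ_apply', st10_rot60_norm, ih]

lemma st10_rotR_norm (x : V2) : ‖rotR x‖ = ‖x‖ := by
  refine st10_norm_eq_of_sq (norm_nonneg _) (norm_nonneg _) ?_
  have h0 : rotR x 0 = -(1/2) * x 0 + (Real.sqrt 3 / 2) * x 1 := by simp [rotR, vec]
  have h1 : rotR x 1 = -(Real.sqrt 3 / 2) * x 0 - (1/2) * x 1 := by simp [rotR, vec]
  rw [st10_norm_sq, st10_norm_sq, h0, h1]
  linear_combination ((x 0)^2/4 + (x 1)^2/4) * st10_sq3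

lemma st10_rotR_iter_norm (n : ℕ) (x : V2) : ‖rotR^[n] x‖ = ‖x‖ := by
  induction n with
  | zero => simp
  | succ n ih => rw [Function.iterate_succ_apply', st10_rotR_norm, ih]

lemma st10_eA1_norm : ‖eA1‖ = 1 / Real.sqrt 3 := by
  refine st10_norm_eq_of_sq (norm_nonneg _) (by positivity) ?_
  rw [st10_norm_sq]
  have h0 : eA1 0 = 1 / Real.sqrt 3 := by simp [eA1, vec]
  have h1 : eA1 1 = 0 := by simp [eA1, vec]
  rw [h0, h1]; ring

lemma st10_e_norm (I : Bool) (ν : Fin 3) : ‖eVec I ν‖ = 1 / Real.sqrt 3 := by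
  have hA : ∀ ν : Fin 3, ‖eA ν‖ = 1 / Real.sqrt 3 := fun ν => by
    rw [eA, st10_rotR_iter_norm, st10_eA1_norm]
  cases I
  · simp only [eVec, eB, Bool.false_eq_true, if_false, norm_neg]; exact hA ν
  · simp only [eVec, if_true]; exact hA ν

lemma st10_rot3 (x : V2) : rot60 (rot60 (rot60 x)) = -x := by
  ext i
  have hneg0 : (-x) 0 = -(x 0) := rfl
  have hneg1 : (-x) 1 = -(x 1) := rfl
  fin_cases i
  · show rot60 (rot60 (rot60 x)) 0 = (-x) 0
    simp only [st10_rot60_apply0, st10_rot60_apply1, hneg0]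
    linear_combination (-(3/8) * x 0 - Real.sqrt 3 / 8 * x 1) * st10_sq3
  · show rot60 (rot60 (rot60 x)) 1 = (-x) 1
    simp only [st10_rot60_apply0, st10_rot60_apply1, hneg1]
    linear_combination (Real.sqrt 3 / 8 * x 0 - (3/8) * x 1) * st10_sq3

lemma st10_dot_neg (z w : V2) : dot z (-w) = -(dot z w) := by
  have h0 : (-w) 0 = -(w 0) := rfl
  have h1 : (-w) 1 = -(w 1) := rfl
  simp only [dot, h0, h1]; ring

lemma st10_sum_sq (z y : V2) :
    (dot z y)^2 + (dot z (rot60 y))^2 + (dot z (rot60 (rot60 y)))^2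
      = 3/2 * (‖z‖ * ‖y‖)^2 := by
  have hz := st10_norm_sq z
  have hy := st10_norm_sq y
  rw [mul_pow, hz, hy]
  simp only [dot, st10_rot60_apply0, st10_rot60_apply1]
  linear_combination ((z 0 * y 0 + z 1 * y 1)^2 * (Real.sqrt 3 ^2 + 1) / 16
    + (z 0 * y 1 - z 1 * y 0)^2 / 2
    - Real.sqrt 3 * (z 0 * y 0 + z 1 * y 1) * (z 0 * y 1 - z 1 * y 0) / 4) * st10_sq3

lemma st10_key (z y : V2) : ∃ l : Fin 6,
    ‖z‖ * ‖y‖ / 2 ≤ dot z (rot60^[(l : ℕ)] y) ∧ ‖rot60^[(l : ℕ)] y‖ = ‖y‖ := by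
  have hsum := st10_sum_sq z y
  have hP : 0 ≤ ‖z‖ * ‖y‖ := mul_nonneg (norm_nonneg _) (norm_nonneg _)
  set P := ‖z‖ * ‖y‖ with hPdef
  have hmax : P/2 ≤ |dot z y| ∨ P/2 ≤ |dot z (rot60 y)| ∨
      P/2 ≤ |dot z (rot60 (rot60 y))| := by
    by_contra h
    push_neg at h
    obtain ⟨h1, h2, h3⟩ := h
    nlinarith [abs_nonneg (dot z y), abs_nonneg (dot z (rot60 y)),
      abs_nonneg (dot z (rot60 (rot60 y))), sq_abs (dot z y),
      sq_abs (dot z (rot60 y)), sq_abs (dot z (rot60 (rot60 y)))]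
  have e0 : rot60^[((0 : Fin 6) : ℕ)] y = y := rfl
  have e1 : rot60^[((1 : Fin 6) : ℕ)] y = rot60 y := rfl
  have e2 : rot60^[((2 : Fin 6) : ℕ)] y = rot60 (rot60 y) := rfl
  have e3 : rot60^[((3 : Fin 6) : ℕ)] y = -y := st10_rot3 y
  have e4 : rot60^[((4 : Fin 6) : ℕ)] y = -(rot60 y) := by
    show rot60 (rot60 (rot60 (rot60 y))) = _
    exact st10_rot3 (rot60 y)
  have e5 : rot60^[((5 : Fin 6) : ℕ)] y = -(rot60 (rot60 y)) := by
    show rot60 (rot60 (rot60 (rot60 (rot60 y)))) = _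
    exact st10_rot3 (rot60 (rot60 y))
  rcases hmax with h | h | h
  · rcases abs_cases (dot z y) with ⟨ha, _⟩ | ⟨ha, _⟩
    · exact ⟨0, by rw [e0]; linarith, by rw [e0]⟩
    · exact ⟨3, by rw [e3, st10_dot_neg]; linarith, by rw [e3, norm_neg]⟩
  · rcases abs_cases (dot z (rot60 y)) with ⟨ha, _⟩ | ⟨ha, _⟩
    · exact ⟨1, by rw [e1]; linarith, by rw [e1, st10_rot60_norm]⟩
    · exact ⟨4, by rw [e4, st10_dot_neg]; linarith,
        by rw [e4, norm_neg, st10_rot60_norm]⟩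
  · rcases abs_cases (dot z (rot60 (rot60 y))) with ⟨ha, _⟩ | ⟨ha, _⟩
    · exact ⟨2, by rw [e2]; linarith, by rw [e2, st10_rot60_norm, st10_rot60_norm]⟩
    · exact ⟨5, by rw [e5, st10_dot_neg]; linarith,
        by rw [e5, norm_neg, st10_rot60_norm, st10_rot60_norm]⟩

lemma st10_norm_sub_sq (x w : V2) :
    ‖x - w‖^2 = ‖x‖^2 + ‖w‖^2 - 2 * dot x w := by
  have h0 : (x - w) 0 = x 0 - w 0 := rfl
  have h1 : (x - w) 1 = x 1 - w 1 := rfl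
  rw [st10_norm_sq, st10_norm_sq, st10_norm_sq, h0, h1]
  simp only [dot]; ring

end Aux

/-- (Geometric Lemma, part 1.) There is `c′ > 0` so that for all
`I ∈ {A, B}`, `ν ∈ {1,2,3}` and `z, y` with `|z|, |y| < 0.33/√3`, some `l₀ ∈ {0,…,5}`
satisfies `|z + e_{I,ν} − y| − |z − R₆₀^{l₀} y| ≥ c′ · (1/√3)`. -/
theorem statement10 :
    ∃ c' : ℝ, 0 < c' ∧ ∀ (I : Bool) (ν : Fin 3) (z y : V2),
      ‖z‖ < 0.33 / Real.sqrt 3 → ‖y‖ < 0.33 / Real.sqrt 3 →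
      ∃ l₀ : Fin 6,
        c' * (1 / Real.sqrt 3) ≤ ‖z + eVec I ν - y‖ - ‖z - rot60^[(l₀ : ℕ)] y‖ := by
  refine ⟨0.01, by norm_num, ?_⟩
  intro I ν z y hz hy
  obtain ⟨l, hdot, hwnorm⟩ := st10_key z y
  refine ⟨l, ?_⟩
  set s := Real.sqrt 3 with hs
  have hs0 : 0 < s := Real.sqrt_pos.2 (by norm_num)
  set w := rot60^[(l : ℕ)] y with hwdef
  have hsub : ‖z - w‖^2 = ‖z‖^2 + ‖y‖^2 - 2 * dot z w := by
    rw [st10_norm_sub_sq, hwnorm]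
  have hm : (0:ℝ) < 0.33 / s := by positivity
  have hzw_sq : ‖z - w‖^2 ≤ (0.33 / s)^2 := by
    nlinarith [hsub, hdot, mul_pos (sub_pos.2 hz) (sub_pos.2 hy),
      mul_nonneg (norm_nonneg z) (sub_pos.2 hz).le,
      mul_nonneg (norm_nonneg y) (sub_pos.2 hy).le]
  have hzw : ‖z - w‖ ≤ 0.33 / s := by
    nlinarith [norm_nonneg (z - w), hzw_sq, hm]
  have he : ‖eVec I ν‖ = 1 / s := st10_e_norm I ν
  have heq : eVec I ν = (z + eVec I ν - y) - (z - y) := by abel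
  have htri : 1 / s ≤ ‖z + eVec I ν - y‖ + (‖z‖ + ‖y‖) := by
    calc 1 / s = ‖eVec I ν‖ := he.symm
    _ = ‖(z + eVec I ν - y) - (z - y)‖ := by rw [← heq]
    _ ≤ ‖z + eVec I ν - y‖ + ‖z - y‖ := norm_sub_le _ _
    _ ≤ _ := by linarith [norm_sub_le z y]
  have h1 : (0.33:ℝ) / s = 0.33 * (1 / s) := by ring
  linarith [hz, hy, hzw, htri]
end
end

section
/- Let r₀ > 0, c₀′ > 0 and c₀ ∈ (0, 1]. There exist constants C₁, C₂, c₁ > 0 and λ⋆ > 0, depending only on r₀, c₀′ and c₀, such that the following holds for every λ ≥ λ⋆. Let V₀: ℝ² → ℝ be measurable with −1 ≤ V₀(y) ≤ 0 for all y and V₀(y) = 0 whenever |y| > r₀; let μ satisfy c₀λ ≤ μ ≤ λ; and let p₀: ℝ² → [0, ∞) be square-integrable with ∫_{ℝ²} p₀(x)² dx = 1 and satisfy, for every x ∈ ℝ², the integral equation p₀(x) = ∫_{ℝ²} 𝒦(μ|x − y|) λ² |V₀(y)| p₀(y) dy. Then p₀(x) ≤ C₁ e^{−c₁ λ |x|}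 for every x with |x| ≥ r₀ + c₀′, and p₀(x) ≤ C₂ λ for every x ∈ ℝ². -/
noncomputable section

open scoped Real

open MeasureTheory Set ENNReal

namespace Stmt15Aux

lemma exp_sq_bound {t : ℝ} (ht : 0 ≤ t) : t ^ 2 * Real.exp (-t) ≤ 4 := by
  have h1 := Real.add_one_le_exp (t / 2)
  have h2 := Real.exp_pos (t / 2)
  have h3 : Real.exp (t / 2) * Real.exp (t / 2) = Real.exp t := by
    rw [← Real.exp_add]; ring_nf
  have h4 : Real.exp (-t) * Real.exp t = 1 := by rw [← Real.exp_add]; simp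
  have h5 := Real.exp_pos t
  have h6 := Real.exp_pos (-t)
  nlinarith [sq_nonneg (t / 2), sq_nonneg (t / 2 + 1)]

lemma Kker_nonneg {r : ℝ} (hr : 0 ≤ r) : 0 ≤ Kker r := by
  apply mul_nonneg (mul_nonneg (by positivity) (Real.exp_nonneg _))
  apply setIntegral_nonneg measurableSet_Ioi
  intro ζ hζ
  have h1 : (0:ℝ) ≤ ζ := (le_of_lt hζ)
  have h2 : (0:ℝ) ≤ 2 * r + ζ := by linarith
  exact mul_nonneg (mul_nonneg (Real.exp_nonneg _) (Real.rpow_nonneg h1 _))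
    (Real.rpow_nonneg h2 _)

lemma Kker_le {r : ℝ} (hr : 0 < r) : Kker r ≤ Real.exp (-r) / Real.sqrt r := by
  have h2r : (0:ℝ) < 2 * r := by linarith
  have hg : IntegrableOn (fun ζ : ℝ => Real.exp (-ζ) * ζ ^ (-(1/2:ℝ))) (Ioi (0:ℝ)) := by
    have h := Real.GammaIntegral_convergent (by norm_num : (0:ℝ) < 1/2)
    have he : (1/2 - 1 : ℝ) = -(1/2) := by norm_num
    rwa [he] at h
  have hGam : (∫ ζ in Ioi (0:ℝ), Real.exp (-ζ) * ζ ^ (-(1/2:ℝ))) = Real.sqrt π := by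
    have h := (Real.Gamma_eq_integral (by norm_num : (0:ℝ) < 1/2)).symm
    have he : (1/2 - 1 : ℝ) = -(1/2) := by norm_num
    rw [he] at h
    rw [h, Real.Gamma_one_half_eq]
  have hI : (∫ ζ in Ioi (0:ℝ), Real.exp (-ζ) * ζ ^ (-(1/2:ℝ)) * (2*r+ζ) ^ (-(1/2:ℝ)))
      ≤ Real.sqrt π * (2*r) ^ (-(1/2:ℝ)) := by
    have hint : IntegrableOn
        (fun ζ : ℝ => Real.exp (-ζ) * ζ ^ (-(1/2:ℝ)) * (2*r) ^ (-(1/2:ℝ))) (Ioi (0:ℝ)) :=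
      hg.mul_const _
    have hle := integral_mono_of_nonneg (μ := volume.restrict (Ioi (0:ℝ)))
      (f := fun ζ : ℝ => Real.exp (-ζ) * ζ ^ (-(1/2:ℝ)) * (2*r+ζ) ^ (-(1/2:ℝ)))
      (g := fun ζ : ℝ => Real.exp (-ζ) * ζ ^ (-(1/2:ℝ)) * (2*r) ^ (-(1/2:ℝ)))
      ?_ hint ?_
    · rw [integral_mul_const, hGam] at hle
      exact hle
    · filter_upwards [ae_restrict_mem measurableSet_Ioi] with ζ hζ
      have h1 : (0:ℝ) ≤ ζ := le_of_lt hζ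
      have h2 : (0:ℝ) ≤ 2 * r + ζ := by linarith
      exact mul_nonneg (mul_nonneg (Real.exp_nonneg _) (Real.rpow_nonneg h1 _))
        (Real.rpow_nonneg h2 _)
    · filter_upwards [ae_restrict_mem measurableSet_Ioi] with ζ hζ
      have hζ0 : (0:ℝ) < ζ := hζ
      refine mul_le_mul_of_nonneg_left ?_
        (mul_nonneg (Real.exp_nonneg _) (Real.rpow_nonneg hζ0.le _))
      exact Real.rpow_le_rpow_of_nonpos h2r (by linarith) (by norm_num)
  have hKle : Kker r ≤ (2 * π)⁻¹ * Real.exp (-r) * (Real.sqrt π * (2*r) ^ (-(1/2:ℝ))) := by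
    refine mul_le_mul_of_nonneg_left hI ?_
    positivity
  refine hKle.trans ?_
  have hrw : (2*r : ℝ) ^ (-(1/2:ℝ)) = (Real.sqrt (2*r))⁻¹ := by
    rw [Real.rpow_neg h2r.le, Real.sqrt_eq_rpow]
  rw [hrw, div_eq_mul_inv]
  have hsq : (Real.sqrt (2*r))⁻¹ ≤ (Real.sqrt r)⁻¹ := by
    apply inv_anti₀ (Real.sqrt_pos.mpr hr)
    exact Real.sqrt_le_sqrt (by linarith)
  have hpi : (2 * π)⁻¹ * Real.sqrt π ≤ 1 := by
    have h3 := Real.pi_gt_three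
    have h1 : Real.sqrt π ≤ 2 * π := by
      rw [show (2*π : ℝ) = Real.sqrt ((2*π)^2) from (Real.sqrt_sq (by positivity)).symm]
      exact Real.sqrt_le_sqrt (by nlinarith)
    rw [inv_mul_le_iff₀ (by positivity)]
    linarith
  calc (2 * π)⁻¹ * Real.exp (-r) * (Real.sqrt π * (Real.sqrt (2*r))⁻¹)
      = ((2 * π)⁻¹ * Real.sqrt π) * (Real.exp (-r) * (Real.sqrt (2*r))⁻¹) := by ring
    _ ≤ 1 * (Real.exp (-r) * (Real.sqrt r)⁻¹) := by
        apply mul_le_mul hpi (mul_le_mul_of_nonneg_left hsq (Real.exp_nonneg _))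
          (by positivity) (by norm_num)
    _ = Real.exp (-r) * (Real.sqrt r)⁻¹ := by ring

lemma aux_int_le {α : Type*} [MeasurableSpace α] {m : Measure α} {F : α → ℝ}
    (hF : 0 ≤ᵐ[m] F) {B : ℝ} (hB : 0 ≤ B)
    (h : (∫⁻ y, ENNReal.ofReal (F y) ∂m) ≤ ENNReal.ofReal B) : (∫ y, F y ∂m) ≤ B := by
  by_cases hInt : Integrable F m
  · have heq := ofReal_integral_eq_lintegral_ofReal hInt hF
    rw [← heq] at h
    exact (ENNReal.ofReal_le_ofReal_iff hB).mp h
  · rw [integral_undef hInt]; exact hB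

lemma lintegral_radial (f : ℝ → ℝ≥0∞) (hf : Measurable f) :
    (∫⁻ x : V2, f ‖x‖) = (volume : Measure V2).toSphere univ *
      ∫⁻ r in Ioi (0:ℝ), ENNReal.ofReal r * f r := by
  have hdim : Module.finrank ℝ V2 = 2 := finrank_euclideanSpace_fin
  have h1 : (∫⁻ x : V2, f ‖x‖) =
      ∫⁻ x : ({0}ᶜ : Set V2), f ‖(x : V2)‖ ∂((volume : Measure V2).comap (↑)) := by
    have h := lintegral_subtype_comap (μ := (volume : Measure V2))
      ((measurableSet_singleton (0:V2)).compl) (fun v : V2 => f ‖v‖)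
    rw [MeasureTheory.restrict_compl_singleton] at h
    exact h.symm
  have h2 : (∫⁻ x : ({0}ᶜ : Set V2), f ‖(x : V2)‖ ∂((volume : Measure V2).comap (↑))) =
      ∫⁻ p : Metric.sphere (0:V2) 1 × Ioi (0:ℝ), f p.2
        ∂((volume : Measure V2).toSphere.prod
          (Measure.volumeIoiPow (Module.finrank ℝ V2 - 1))) := by
    have h := (Measure.measurePreserving_homeomorphUnitSphereProd
      (volume : Measure V2)).lintegral_comp_emb
      (Homeomorph.measurableEmbedding _)
      (fun p : Metric.sphere (0:V2) 1 × Ioi (0:ℝ) => f p.2)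
    convert h using 3
    simp [homeomorphUnitSphereProd]
  have h3 : (∫⁻ p : Metric.sphere (0:V2) 1 × Ioi (0:ℝ), f p.2
        ∂((volume : Measure V2).toSphere.prod
          (Measure.volumeIoiPow (Module.finrank ℝ V2 - 1)))) =
      (volume : Measure V2).toSphere univ *
        ∫⁻ r : Ioi (0:ℝ), f r ∂(Measure.volumeIoiPow (Module.finrank ℝ V2 - 1)) := by
    have hm : Measurable fun p : Metric.sphere (0:V2) 1 × Ioi (0:ℝ) => f p.2 :=
      hf.comp (measurable_subtype_coe.comp measurable_snd)
    rw [lintegral_prod _ hm.aemeasurable]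
    simp [lintegral_const, mul_comm]
  have h4 : (∫⁻ r : Ioi (0:ℝ), f r ∂(Measure.volumeIoiPow (Module.finrank ℝ V2 - 1))) =
      ∫⁻ r in Ioi (0:ℝ), ENNReal.ofReal r * f r := by
    have e1 : Measure.volumeIoiPow (Module.finrank ℝ V2 - 1) =
        (Measure.comap Subtype.val volume).withDensity
          (fun r : Ioi (0:ℝ) => ENNReal.ofReal ((r : ℝ) ^ 1)) := by
      rw [hdim]
      rfl
    have hm1 : Measurable fun r : Ioi (0:ℝ) => ENNReal.ofReal ((r : ℝ) ^ 1) :=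
      (measurable_subtype_coe.pow_const 1).ennreal_ofReal
    have hm2 : Measurable fun r : Ioi (0:ℝ) => f r := hf.comp measurable_subtype_coe
    calc (∫⁻ r : Ioi (0:ℝ), f r ∂(Measure.volumeIoiPow (Module.finrank ℝ V2 - 1)))
        = ∫⁻ r : Ioi (0:ℝ), ENNReal.ofReal ((r:ℝ)) * f r
            ∂(Measure.comap Subtype.val volume) := by
          rw [e1, lintegral_withDensity_eq_lintegral_mul _ hm1 hm2]
          simp [pow_one]
      _ = ∫⁻ r in Ioi (0:ℝ), ENNReal.ofReal r * f r :=
          lintegral_subtype_comap measurableSet_Ioi (fun r : ℝ => ENNReal.ofReal r * f r)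
  rw [h1, h2, h3, h4]

lemma sq_helper {μ t : ℝ} (hμ : 0 < μ) (ht : 0 ≤ t) :
    (Real.exp (-(μ * t)) / Real.sqrt (μ * t)) ^ 2 = Real.exp (-(2*μ) * t) / (μ * t) := by
  rw [div_pow, Real.sq_sqrt (by positivity), sq, ← Real.exp_add]
  ring_nf

lemma lintegral_Gsq {μ : ℝ} (hμ : 0 < μ) (x : V2) :
    (∫⁻ y : V2, (ENNReal.ofReal
        (Real.exp (-(μ * ‖x - y‖)) / Real.sqrt (μ * ‖x - y‖))) ^ (2:ℝ))
      = ENNReal.ofReal ((volume (Metric.ball (0:V2) 1)).toReal / μ ^ 2) := by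
  set g : ℝ → ℝ≥0∞ := fun t => ENNReal.ofReal (Real.exp (-(2*μ) * t) / (μ * t)) with hg
  have hgm : Measurable g := by
    apply Measurable.ennreal_ofReal
    exact (Real.measurable_exp.comp (measurable_const.mul measurable_id)).div
      (measurable_const.mul measurable_id)
  have hpt : ∀ y : V2, (ENNReal.ofReal
      (Real.exp (-(μ * ‖x - y‖)) / Real.sqrt (μ * ‖x - y‖))) ^ (2:ℝ) = g ‖y - x‖ := by
    intro y
    rw [ENNReal.ofReal_rpow_of_nonneg (by positivity) (by norm_num), Real.rpow_two,
      norm_sub_rev x y, sq_helper hμ (norm_nonneg _)]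
  have htrans : (∫⁻ y : V2, g ‖y - x‖) = ∫⁻ z : V2, g ‖z‖ := by
    have h := lintegral_add_right_eq_self (μ := (volume : Measure V2))
      (fun z : V2 => g ‖z‖) (-x)
    simp only [← sub_eq_add_neg] at h
    exact h
  calc (∫⁻ y : V2, (ENNReal.ofReal
        (Real.exp (-(μ * ‖x - y‖)) / Real.sqrt (μ * ‖x - y‖))) ^ (2:ℝ))
      = ∫⁻ y : V2, g ‖y - x‖ := by simp only [hpt]
    _ = ∫⁻ z : V2, g ‖z‖ := htrans
    _ = (volume : Measure V2).toSphere univ * ∫⁻ r in Ioi (0:ℝ), ENNReal.ofReal r * g r :=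
        lintegral_radial g hgm
    _ = ENNReal.ofReal ((volume (Metric.ball (0:V2) 1)).toReal / μ ^ 2) := by
        have h1 : (∫⁻ r in Ioi (0:ℝ), ENNReal.ofReal r * g r)
            = ∫⁻ r in Ioi (0:ℝ), ENNReal.ofReal (Real.exp (-(2*μ) * r) / μ) := by
          apply setLIntegral_congr_fun measurableSet_Ioi
          intro r hr
          rw [hg]
          dsimp only
          rw [← ENNReal.ofReal_mul hr.le]
          congr 1
          have hr0 : (r:ℝ) ≠ 0 := ne_of_gt hr
          have hμ0 : μ ≠ 0 := ne_of_gt hμ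
          field_simp
        have hInt : IntegrableOn (fun r : ℝ => Real.exp (-(2*μ) * r) / μ) (Ioi (0:ℝ)) :=
          (exp_neg_integrableOn_Ioi 0 (by positivity)).div_const μ
        have h2 : (∫⁻ r in Ioi (0:ℝ), ENNReal.ofReal (Real.exp (-(2*μ) * r) / μ))
            = ENNReal.ofReal (∫ r in Ioi (0:ℝ), Real.exp (-(2*μ) * r) / μ) := by
          rw [← ofReal_integral_eq_lintegral_ofReal hInt]
          filter_upwards with r
          positivity
        have h3 : (∫ r in Ioi (0:ℝ), Real.exp (-(2*μ) * r) / μ) = 1 / (2 * μ ^ 2) := by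
          rw [integral_div]
          have h4 : (∫ r in Ioi (0:ℝ), Real.exp (-(2*μ) * r))
              = (∫ r in Ioi (0:ℝ), Real.exp (-(2*μ*r))) := by
            congr 1; ext r; ring_nf
          have h5 := integral_comp_mul_left_Ioi (fun u : ℝ => Real.exp (-u)) 0
            (by positivity : (0:ℝ) < 2*μ)
          simp only [mul_zero] at h5
          rw [h4, h5, integral_exp_neg_Ioi_zero]
          have hμ0 : μ ≠ 0 := ne_of_gt hμ
          rw [smul_eq_mul]
          field_simp
        have h6 : (volume : Measure V2).toSphere univ
            = 2 * volume (Metric.ball (0:V2) 1) := by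
          rw [Measure.toSphere_apply_univ]
          norm_num [finrank_euclideanSpace_fin]
        rw [h1, h2, h3, h6]
        have hb : volume (Metric.ball (0:V2) 1) < ⊤ := measure_ball_lt_top
        have htv : (0:ℝ) ≤ (volume (Metric.ball (0:V2) 1)).toReal := ENNReal.toReal_nonneg
        nth_rewrite 1 [show volume (Metric.ball (0:V2) 1)
            = ENNReal.ofReal ((volume (Metric.ball (0:V2) 1)).toReal) from
          (ENNReal.ofReal_toReal hb.ne).symm]
        rw [mul_assoc, ← ENNReal.ofReal_mul htv, two_mul,
          ← ENNReal.ofReal_add (by positivity) (by positivity)]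
        congr 1
        have hμ0 : μ ≠ 0 := ne_of_gt hμ
        field_simp
        ring

lemma lintegral_ind_const {r₀ c : ℝ} (hc : 0 ≤ c) :
    (∫⁻ y : V2, (Set.indicator (Metric.closedBall (0:V2) r₀)
        (fun _ => ENNReal.ofReal c) y) ^ (2:ℝ))
      = ENNReal.ofReal (c ^ 2 * (volume (Metric.closedBall (0:V2) r₀)).toReal) := by
  have hpt : ∀ y : V2, (Set.indicator (Metric.closedBall (0:V2) r₀)
      (fun _ => ENNReal.ofReal c) y) ^ (2:ℝ)
      = Set.indicator (Metric.closedBall (0:V2) r₀)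
          (fun _ => ENNReal.ofReal (c ^ 2)) y := by
    intro y
    by_cases hy : y ∈ Metric.closedBall (0:V2) r₀
    · rw [Set.indicator_of_mem hy, Set.indicator_of_mem hy,
        ENNReal.ofReal_rpow_of_nonneg hc (by norm_num), Real.rpow_two]
    · rw [Set.indicator_of_notMem hy, Set.indicator_of_notMem hy]
      exact ENNReal.zero_rpow_of_pos (by norm_num)
  simp only [hpt]
  rw [lintegral_indicator measurableSet_closedBall, setLIntegral_const]
  have hb : volume (Metric.closedBall (0:V2) r₀) < ⊤ := measure_closedBall_lt_top
  nth_rewrite 1 [show volume (Metric.closedBall (0:V2) r₀)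
      = ENNReal.ofReal ((volume (Metric.closedBall (0:V2) r₀)).toReal) from
    (ENNReal.ofReal_toReal hb.ne).symm]
  rw [← ENNReal.ofReal_mul (by positivity)]

lemma main_bound {r₀ lam μ : ℝ} (hμ : 0 < μ) (hlam : 0 ≤ lam)
    {V₀ : V2 → ℝ} (hV1 : ∀ y, -1 ≤ V₀ y) (hV0 : ∀ y, V₀ y ≤ 0)
    (hVs : ∀ y : V2, r₀ < ‖y‖ → V₀ y = 0)
    {p₀ : V2 → ℝ} (hp0 : ∀ y, 0 ≤ p₀ y)
    (hp2 : MeasureTheory.MemLp p₀ 2 (volume : Measure V2))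
    (hpn : (∫ x : V2, (p₀ x) ^ 2) = 1)
    {x : V2} (heq : p₀ x = ∫ y : V2, Kker (μ * ‖x - y‖) * (lam ^ 2 * |V₀ y| * p₀ y))
    {E : ℝ} (hE : 0 ≤ E)
    (hD : (∫⁻ y : V2, (Set.indicator (Metric.closedBall (0:V2) r₀)
        (fun y => ENNReal.ofReal (Real.exp (-(μ * ‖x - y‖)) / Real.sqrt (μ * ‖x - y‖))) y)
          ^ (2:ℝ)) ≤ ENNReal.ofReal (E ^ 2)) :
    p₀ x ≤ lam ^ 2 * E := by
  set G : V2 → ℝ≥0∞ := Set.indicator (Metric.closedBall (0:V2) r₀)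
    (fun y => ENNReal.ofReal (Real.exp (-(μ * ‖x - y‖)) / Real.sqrt (μ * ‖x - y‖)))
    with hGdef
  set P : V2 → ℝ≥0∞ := fun y => ENNReal.ofReal (p₀ y) with hPdef
  have hF0 : ∀ y : V2, 0 ≤ Kker (μ * ‖x - y‖) * (lam ^ 2 * |V₀ y| * p₀ y) := by
    intro y
    exact mul_nonneg (Kker_nonneg (mul_nonneg hμ.le (norm_nonneg _)))
      (mul_nonneg (mul_nonneg (sq_nonneg _) (abs_nonneg _)) (hp0 y))
  have hGm : Measurable G := by
    apply Measurable.indicator ?_ measurableSet_closedBall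
    apply Measurable.ennreal_ofReal
    have hc : Continuous fun y : V2 => μ * ‖x - y‖ :=
      continuous_const.mul ((continuous_const.sub continuous_id).norm)
    exact ((Real.continuous_exp.comp hc.neg).measurable).div
      ((Real.continuous_sqrt.comp hc).measurable)
  have hPm : AEMeasurable P (volume : Measure V2) :=
    (hp2.aestronglyMeasurable.aemeasurable).ennreal_ofReal
  have hb : ∀ᵐ y : V2, ENNReal.ofReal (Kker (μ * ‖x - y‖) * (lam ^ 2 * |V₀ y| * p₀ y))
      ≤ ENNReal.ofReal (lam ^ 2) * (G y * P y) := by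
    have hne : ∀ᵐ y : V2, y ≠ x := by
      refine MeasureTheory.ae_iff.mpr ?_
      simp only [ne_eq, not_not, Set.setOf_eq_eq_singleton]
      exact measure_singleton x
    filter_upwards [hne] with y hy
    by_cases hyr : ‖y‖ ≤ r₀
    · have hd : (0:ℝ) < ‖x - y‖ := norm_sub_pos_iff.mpr (Ne.symm hy)
      have hmd : 0 < μ * ‖x - y‖ := mul_pos hμ hd
      have hK := Kker_le hmd
      have habs : |V₀ y| ≤ 1 := abs_le.mpr ⟨hV1 y, le_trans (hV0 y) zero_le_one⟩
      have hGy : G y = ENNReal.ofReal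
          (Real.exp (-(μ * ‖x - y‖)) / Real.sqrt (μ * ‖x - y‖)) := by
        rw [hGdef]
        exact Set.indicator_of_mem (mem_closedBall_zero_iff.mpr hyr) _
      have hle : Kker (μ * ‖x - y‖) * (lam ^ 2 * |V₀ y| * p₀ y)
          ≤ lam ^ 2 * ((Real.exp (-(μ * ‖x - y‖)) / Real.sqrt (μ * ‖x - y‖)) * p₀ y) := by
        calc Kker (μ * ‖x - y‖) * (lam ^ 2 * |V₀ y| * p₀ y)
            ≤ (Real.exp (-(μ * ‖x - y‖)) / Real.sqrt (μ * ‖x - y‖))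
                * (lam ^ 2 * |V₀ y| * p₀ y) :=
              mul_le_mul_of_nonneg_right hK
                (mul_nonneg (mul_nonneg (sq_nonneg _) (abs_nonneg _)) (hp0 y))
          _ ≤ (Real.exp (-(μ * ‖x - y‖)) / Real.sqrt (μ * ‖x - y‖))
                * (lam ^ 2 * p₀ y) := by
              apply mul_le_mul_of_nonneg_left ?_ (by positivity)
              have h2 := mul_le_mul_of_nonneg_right
                (mul_le_mul_of_nonneg_left habs (sq_nonneg lam)) (hp0 y)
              simpa [mul_one] using h2
          _ = lam ^ 2 * ((Real.exp (-(μ * ‖x - y‖)) / Real.sqrt (μ * ‖x - y‖)) * p₀ y) := by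
              ring
      calc ENNReal.ofReal (Kker (μ * ‖x - y‖) * (lam ^ 2 * |V₀ y| * p₀ y))
          ≤ ENNReal.ofReal (lam ^ 2 *
              ((Real.exp (-(μ * ‖x - y‖)) / Real.sqrt (μ * ‖x - y‖)) * p₀ y)) :=
            ENNReal.ofReal_le_ofReal hle
        _ = ENNReal.ofReal (lam ^ 2) *
              (ENNReal.ofReal (Real.exp (-(μ * ‖x - y‖)) / Real.sqrt (μ * ‖x - y‖)) *
                ENNReal.ofReal (p₀ y)) := by
            rw [ENNReal.ofReal_mul (sq_nonneg lam), ENNReal.ofReal_mul (by positivity)]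
        _ = ENNReal.ofReal (lam ^ 2) * (G y * P y) := by rw [hGy]
    · push_neg at hyr
      have hz : V₀ y = 0 := hVs y hyr
      simp [hz]
  have hP2 : (∫⁻ y : V2, P y ^ (2:ℝ)) = 1 := by
    have h1 : ∀ y : V2, P y ^ (2:ℝ) = ENNReal.ofReal ((p₀ y) ^ 2) := fun y => by
      rw [hPdef, ENNReal.ofReal_rpow_of_nonneg (hp0 y) (by norm_num), Real.rpow_two]
    simp only [h1]
    rw [← ofReal_integral_eq_lintegral_ofReal hp2.integrable_sq
      (Filter.Eventually.of_forall fun y => sq_nonneg _), hpn, ENNReal.ofReal_one]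
  have hG2 : (∫⁻ y : V2, G y ^ (2:ℝ)) ^ ((1:ℝ)/2) ≤ ENNReal.ofReal E := by
    refine le_trans (ENNReal.rpow_le_rpow hD (by norm_num)) ?_
    have hEe : ((E:ℝ) ^ 2) ^ ((1:ℝ)/2) = E := by
      rw [← Real.rpow_natCast E 2, ← Real.rpow_mul hE]
      norm_num
    rw [ENNReal.ofReal_rpow_of_nonneg (sq_nonneg E) (by norm_num), hEe]
  have hmain : (∫⁻ y : V2, ENNReal.ofReal
        (Kker (μ * ‖x - y‖) * (lam ^ 2 * |V₀ y| * p₀ y)))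
      ≤ ENNReal.ofReal (lam ^ 2 * E) := by
    calc (∫⁻ y : V2, ENNReal.ofReal (Kker (μ * ‖x - y‖) * (lam ^ 2 * |V₀ y| * p₀ y)))
        ≤ ∫⁻ y : V2, ENNReal.ofReal (lam ^ 2) * (G y * P y) := lintegral_mono_ae hb
      _ = ENNReal.ofReal (lam ^ 2) * ∫⁻ y : V2, G y * P y :=
          lintegral_const_mul' _ _ ENNReal.ofReal_ne_top
      _ ≤ ENNReal.ofReal (lam ^ 2) * ((∫⁻ y : V2, G y ^ (2:ℝ)) ^ ((1:ℝ)/2)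
            * (∫⁻ y : V2, P y ^ (2:ℝ)) ^ ((1:ℝ)/2)) := by
          apply mul_le_mul_right
          have hH := ENNReal.lintegral_mul_le_Lp_mul_Lq (volume : Measure V2)
            Real.HolderConjugate.two_two
            hGm.aemeasurable hPm
          simpa using hH
      _ ≤ ENNReal.ofReal (lam ^ 2) * (ENNReal.ofReal E * 1) := by
          apply mul_le_mul_right
          refine mul_le_mul' hG2 ?_
          rw [hP2, ENNReal.one_rpow]
      _ = ENNReal.ofReal (lam ^ 2 * E) := by
          rw [mul_one, ← ENNReal.ofReal_mul (sq_nonneg lam)]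
  rw [heq]
  exact aux_int_le (Filter.Eventually.of_forall hF0)
    (mul_nonneg (sq_nonneg lam) hE) hmain

end Stmt15Aux

open Stmt15Aux in
/-- Pointwise bounds on the atomic ground state: exponential decay
outside the potential well and a linear-in-`λ` bound everywhere. -/
theorem statement15 (r₀ c₀' c₀ : ℝ) (hr₀ : 0 < r₀) (hc₀' : 0 < c₀')
    (hc₀0 : 0 < c₀) (hc₀1 : c₀ ≤ 1) :
    ∃ C₁ C₂ c₁ lamS : ℝ, 0 < C₁ ∧ 0 < C₂ ∧ 0 < c₁ ∧ 0 < lamS ∧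
      ∀ lam : ℝ, lamS ≤ lam →
      ∀ V₀ : V2 → ℝ, Measurable V₀ →
        (∀ y : V2, -1 ≤ V₀ y) → (∀ y : V2, V₀ y ≤ 0) →
        (∀ y : V2, r₀ < ‖y‖ → V₀ y = 0) →
      ∀ μ : ℝ, c₀ * lam ≤ μ → μ ≤ lam →
      ∀ p₀ : V2 → ℝ, (∀ x : V2, 0 ≤ p₀ x) →
        MeasureTheory.MemLp p₀ 2 MeasureTheory.volume →
        (∫ x : V2, (p₀ x) ^ 2) = 1 →
        (∀ x : V2, p₀ x = ∫ y : V2, Kker (μ * ‖x - y‖) * (lam ^ 2 * |V₀ y| * p₀ y)) →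
        ((∀ x : V2, r₀ + c₀' ≤ ‖x‖ → p₀ x ≤ C₁ * Real.exp (-(c₁ * lam * ‖x‖))) ∧
         (∀ x : V2, p₀ x ≤ C₂ * lam)) := by
  have hsum : (0:ℝ) < r₀ + c₀' := by linarith
  set ε : ℝ := c₀' / (r₀ + c₀') with hεdef
  have hε : 0 < ε := div_pos hc₀' hsum
  have hε1 : ε ≤ 1 := div_le_one_of_le₀ (by linarith) hsum.le
  have hεs : ε * (r₀ + c₀') = c₀' := div_mul_cancel₀ _ hsum.ne'
  set c₁ : ℝ := c₀ * ε / 2 with hc₁def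
  have hc₁ : 0 < c₁ := div_pos (mul_pos hc₀0 hε) two_pos
  set A : ℝ := (volume (Metric.closedBall (0:V2) r₀)).toReal with hAdef
  have hA : 0 ≤ A := ENNReal.toReal_nonneg
  set Cb : ℝ := (volume (Metric.ball (0:V2) 1)).toReal with hCbdef
  have hCb : 0 ≤ Cb := ENNReal.toReal_nonneg
  have hK2 : (0:ℝ) < (c₁ * (r₀ + c₀')) ^ 2 := pow_pos (mul_pos hc₁ hsum) 2
  refine ⟨(Real.sqrt A + 1) * (4 / (c₁ * (r₀ + c₀')) ^ 2), (Real.sqrt Cb + 1) / c₀, c₁,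
    max 1 (1 / (c₀ * c₀')), ?_, ?_, hc₁, ?_, ?_⟩
  · exact mul_pos (by positivity) (div_pos four_pos hK2)
  · exact div_pos (by positivity) hc₀0
  · exact lt_of_lt_of_le one_pos (le_max_left _ _)
  intro lam hlam V₀ hVm hV1 hV0 hVs μ hμ1 hμ2 p₀ hp0 hp2 hpn heq
  have hlam1 : (1:ℝ) ≤ lam := le_trans (le_max_left _ _) hlam
  have hlam0 : (0:ℝ) < lam := lt_of_lt_of_le one_pos hlam1
  have hμ0 : (0:ℝ) < μ := lt_of_lt_of_le (mul_pos hc₀0 hlam0) hμ1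
  have hμc : 1 / c₀' ≤ μ := by
    have h1 : 1 / (c₀ * c₀') ≤ lam := le_trans (le_max_right _ _) hlam
    have h2 : c₀ * (1 / (c₀ * c₀')) = 1 / c₀' := by field_simp
    calc (1:ℝ)/c₀' = c₀ * (1/(c₀*c₀')) := h2.symm
      _ ≤ c₀ * lam := mul_le_mul_of_nonneg_left h1 hc₀0.le
      _ ≤ μ := hμ1
  constructor
  · -- exponential decay
    intro x hx
    set cE : ℝ := Real.exp (-(c₀ * ε * (lam * ‖x‖))) with hcEdef
    have hcE : 0 ≤ cE := Real.exp_nonneg _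
    have key : p₀ x ≤ lam ^ 2 * (cE * Real.sqrt A) := by
      apply main_bound hμ0 hlam0.le hV1 hV0 hVs hp0 hp2 hpn (heq x)
        (mul_nonneg hcE (Real.sqrt_nonneg _))
      have hle : ∀ y : V2, (Set.indicator (Metric.closedBall (0:V2) r₀)
          (fun y => ENNReal.ofReal
            (Real.exp (-(μ * ‖x - y‖)) / Real.sqrt (μ * ‖x - y‖))) y)
          ≤ Set.indicator (Metric.closedBall (0:V2) r₀) (fun _ => ENNReal.ofReal cE) y := by
        intro y
        by_cases hy : y ∈ Metric.closedBall (0:V2) r₀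
        · rw [Set.indicator_of_mem hy, Set.indicator_of_mem hy]
          apply ENNReal.ofReal_le_ofReal
          have hyr : ‖y‖ ≤ r₀ := mem_closedBall_zero_iff.mp hy
          have hd1 : ‖x‖ - r₀ ≤ ‖x - y‖ := by
            have := norm_sub_norm_le x y
            linarith
          have hd2 : ε * ‖x‖ ≤ ‖x - y‖ := by
            have hxn : r₀ + c₀' ≤ ‖x‖ := hx
            nlinarith [norm_nonneg x]
          have hd3 : c₀' ≤ ‖x - y‖ := by linarith
          have hmd1 : (1:ℝ) ≤ μ * ‖x - y‖ := by
            have h1 : (1/c₀') * c₀' ≤ μ * ‖x - y‖ := by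
              apply mul_le_mul hμc hd3 hc₀'.le hμ0.le
            rwa [one_div_mul_cancel hc₀'.ne'] at h1
          calc Real.exp (-(μ * ‖x - y‖)) / Real.sqrt (μ * ‖x - y‖)
              ≤ Real.exp (-(μ * ‖x - y‖)) :=
                div_le_self (Real.exp_nonneg _) (Real.one_le_sqrt.mpr hmd1)
            _ ≤ cE := by
                rw [hcEdef]
                apply Real.exp_le_exp.mpr
                apply neg_le_neg
                calc c₀ * ε * (lam * ‖x‖) = (c₀ * lam) * (ε * ‖x‖) := by ring
                  _ ≤ μ * ‖x - y‖ :=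
                    mul_le_mul hμ1 hd2 (mul_nonneg hε.le (norm_nonneg x)) hμ0.le
        · rw [Set.indicator_of_notMem hy, Set.indicator_of_notMem hy]
      calc (∫⁻ y : V2, (Set.indicator (Metric.closedBall (0:V2) r₀)
            (fun y => ENNReal.ofReal
              (Real.exp (-(μ * ‖x - y‖)) / Real.sqrt (μ * ‖x - y‖))) y) ^ (2:ℝ))
          ≤ ∫⁻ y : V2, (Set.indicator (Metric.closedBall (0:V2) r₀)
              (fun _ => ENNReal.ofReal cE) y) ^ (2:ℝ) :=
            lintegral_mono fun y => ENNReal.rpow_le_rpow (hle y) (by norm_num)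
        _ = ENNReal.ofReal (cE ^ 2 * A) := lintegral_ind_const hcE
        _ = ENNReal.ofReal ((cE * Real.sqrt A) ^ 2) := by
            rw [mul_pow, Real.sq_sqrt hA]
    refine le_trans key ?_
    have hsplit : cE = Real.exp (-(c₁ * lam * ‖x‖)) * Real.exp (-(c₁ * lam * ‖x‖)) := by
      rw [← Real.exp_add, hcEdef]
      congr 1
      rw [hc₁def]
      ring
    have ht0 : (0:ℝ) ≤ c₁ * lam * (r₀ + c₀') :=
      mul_nonneg (mul_nonneg hc₁.le hlam0.le) hsum.le
    have he1 : Real.exp (-(c₁ * lam * ‖x‖)) ≤ Real.exp (-(c₁ * lam * (r₀ + c₀'))) := by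
      apply Real.exp_le_exp.mpr
      apply neg_le_neg
      apply mul_le_mul_of_nonneg_left hx (mul_nonneg hc₁.le hlam0.le)
    have he2 : lam ^ 2 * Real.exp (-(c₁ * lam * (r₀ + c₀'))) ≤ 4 / (c₁ * (r₀ + c₀')) ^ 2 := by
      rw [le_div_iff₀ hK2]
      have hb := exp_sq_bound ht0
      calc lam ^ 2 * Real.exp (-(c₁ * lam * (r₀ + c₀'))) * (c₁ * (r₀ + c₀')) ^ 2
          = (c₁ * lam * (r₀ + c₀')) ^ 2 * Real.exp (-(c₁ * lam * (r₀ + c₀'))) := by ring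
        _ ≤ 4 := hb
    have h3 : lam ^ 2 * Real.exp (-(c₁ * lam * ‖x‖)) ≤ 4 / (c₁ * (r₀ + c₀')) ^ 2 :=
      le_trans (mul_le_mul_of_nonneg_left he1 (sq_nonneg lam)) he2
    have h4K : (0:ℝ) ≤ 4 / (c₁ * (r₀ + c₀')) ^ 2 := le_of_lt (div_pos four_pos hK2)
    calc lam ^ 2 * (cE * Real.sqrt A)
        = (lam ^ 2 * Real.exp (-(c₁ * lam * ‖x‖)) * Real.sqrt A) *
            Real.exp (-(c₁ * lam * ‖x‖)) := by rw [hsplit]; ring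
      _ ≤ ((Real.sqrt A + 1) * (4 / (c₁ * (r₀ + c₀')) ^ 2)) *
            Real.exp (-(c₁ * lam * ‖x‖)) := by
          apply mul_le_mul_of_nonneg_right ?_ (Real.exp_nonneg _)
          have h5 : lam ^ 2 * Real.exp (-(c₁ * lam * ‖x‖)) * Real.sqrt A
              ≤ (4 / (c₁ * (r₀ + c₀')) ^ 2) * Real.sqrt A :=
            mul_le_mul_of_nonneg_right h3 (Real.sqrt_nonneg _)
          nlinarith [Real.sqrt_nonneg A]
  · -- uniform bound
    intro x
    have key : p₀ x ≤ lam ^ 2 * (Real.sqrt Cb / μ) := by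
      apply main_bound hμ0 hlam0.le hV1 hV0 hVs hp0 hp2 hpn (heq x)
        (div_nonneg (Real.sqrt_nonneg _) hμ0.le)
      calc (∫⁻ y : V2, (Set.indicator (Metric.closedBall (0:V2) r₀)
            (fun y => ENNReal.ofReal
              (Real.exp (-(μ * ‖x - y‖)) / Real.sqrt (μ * ‖x - y‖))) y) ^ (2:ℝ))
          ≤ ∫⁻ y : V2, (ENNReal.ofReal
              (Real.exp (-(μ * ‖x - y‖)) / Real.sqrt (μ * ‖x - y‖))) ^ (2:ℝ) := by
            apply lintegral_mono fun y => ENNReal.rpow_le_rpow ?_ (by norm_num)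
            exact Set.indicator_le_self' (fun _ _ => zero_le) y
        _ = ENNReal.ofReal (Cb / μ ^ 2) := lintegral_Gsq hμ0 x
        _ = ENNReal.ofReal ((Real.sqrt Cb / μ) ^ 2) := by
            rw [div_pow, Real.sq_sqrt hCb]
    refine le_trans key ?_
    have hgoal : lam ^ 2 * (Real.sqrt Cb / μ) = lam ^ 2 * Real.sqrt Cb / μ := by ring
    rw [hgoal, show (Real.sqrt Cb + 1) / c₀ * lam = ((Real.sqrt Cb + 1) * lam) / c₀ by ring,
      div_le_div_iff₀ hμ0 hc₀0]
    have hs := Real.sqrt_nonneg Cb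
    have e1 : lam * Real.sqrt Cb * (c₀ * lam) ≤ lam * Real.sqrt Cb * μ :=
      mul_le_mul_of_nonneg_left hμ1 (mul_nonneg hlam0.le hs)
    nlinarith [mul_pos hlam0 hμ0]
end
end
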